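/- For any labeled-graph (Λ, 𝒢_Λ), the graph product W(Λ, 𝒢_Λ) is isomorphic as a group to the graph product W(Λ₀, 𝒢_{Λ₀}) of its T₀-quotient. -/

import Mathlib

open Monoid
open scoped commutatorElement

section GraphProduct

variable {V : Type} (Γ : SimpleGraph V) (G : V → Type) [∀ v, Group (G v)]

/-- The relations of the graph product: the normal closure of the commutators
`[g, h]` with `g ∈ G u`, `h ∈ G v` and `u, v` adjacent. -/
def gpRel : Subgroup (CoprodI G) :=
  Subgroup.normalClosure
    {x | ∃ (u v : V) (g : G u) (h : G v), Γ.Adj u v ∧ x = ⁅CoprodI.of g, CoprodI.of h⁆}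

instance : (gpRel Γ G).Normal := Subgroup.normalClosure_normal

/-- The graph product of the family of groups `G` over the graph `Γ`. -/
def GP := CoprodI G ⧸ gpRel Γ G

instance : Group (GP Γ G) := QuotientGroup.Quotient.group _

/-- The canonical map from a vertex group into the graph product. -/
def GP.of (v : V) : G v →* GP Γ G := (QuotientGroup.mk' (gpRel Γ G)).comp CoprodI.of

/-- The subgroup `W(U)` of the graph product generated by the images of the
vertex groups `G u`, `u ∈ U`. -/
def WS (U : Set V) : Subgroup (GP Γ G) := ⨆ u ∈ U, (GP.of Γ G u).range

/-- The support of an element: the smallest vertex set `S` with `g ∈ W(S)`. -/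
def supp (g : GP Γ G) : Set V := ⋂₀ {S : Set V | g ∈ WS Γ G S}

/-- The cyclic support of an element. -/
def supc (g : GP Γ G) : Set V := {u | ∀ w : GP Γ G, u ∈ supp Γ G (w * g * w⁻¹)}

end GraphProduct

/-- A group is directly-indecomposable cyclic if it is infinite cyclic or
cyclic of prime-power order. -/
def DICyclic (G : Type) [Group G] : Prop :=
  IsCyclic G ∧ (Infinite G ∨ ∃ p n : ℕ, p.Prime ∧ Nat.card G = p ^ n)

/-- Word length with respect to a set `S` of generators. -/
noncomputable def wordLength {G : Type} [Group G] (S : Set G) (g : G) : ℕ :=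
  sInf {n | ∃ l : List G, (∀ a ∈ l, a ∈ S) ∧ l.length = n ∧ l.prod = g}

/-- The equivalence relation: `u ∼ v` iff `u` and `v` lie in exactly the same
maximal cliques. -/
def simSetoid {V : Type} (Λ : SimpleGraph V) : Setoid V :=
  ⟨fun u v => ∀ s : Set V, Maximal Λ.IsClique s → (u ∈ s ↔ v ∈ s),
   ⟨fun _ _ _ => Iff.rfl, fun h s hs => (h s hs).symm, fun h h' s hs => (h s hs).trans (h' s hs)⟩⟩

/-- The `T₀`-quotient graph. -/
def T0Q {V : Type} (Λ : SimpleGraph V) : SimpleGraph (Quotient (simSetoid Λ)) where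
  Adj a b := a ≠ b ∧ ∃ u v : V,
    Quotient.mk (simSetoid Λ) u = a ∧ Quotient.mk (simSetoid Λ) v = b ∧ Λ.Adj u v
  symm := ⟨by rintro a b ⟨hne, u, v, hu, hv, h⟩; exact ⟨hne.symm, v, u, hv, hu, h.symm⟩⟩
  loopless := ⟨by rintro a ⟨hne, -⟩; exact hne rfl⟩

/-- The vertex group of the `T₀`-quotient at a class `a`: the direct product
of the vertex groups over the class. -/
def classGroup {V : Type} (Λ : SimpleGraph V) (G : V → Type) [∀ v, Group (G v)]
    (a : Quotient (simSetoid Λ)) : Type :=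
  ∀ v : {v : V // Quotient.mk (simSetoid Λ) v = a}, G v.1

instance {V : Type} (Λ : SimpleGraph V) (G : V → Type) [∀ v, Group (G v)]
    (a : Quotient (simSetoid Λ)) : Group (classGroup Λ G a) :=
  inferInstanceAs (Group (∀ v : {v : V // Quotient.mk (simSetoid Λ) v = a}, G v.1))

/-! ### Auxiliary machinery -/

open scoped Classical

section AuxGP

variable {V : Type} (Γ : SimpleGraph V) (G : V → Type) [∀ v, Group (G v)]

/-- Universal property of the graph product. -/
def GP.lift {H : Type*} [Group H] (f : ∀ v, G v →* H)
    (hf : ∀ u v, Γ.Adj u v → ∀ (g : G u) (h : G v), Commute (f u g) (f v h)) :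
    GP Γ G →* H :=
  QuotientGroup.lift _ (CoprodI.lift f) (by
    intro x hx
    refine Subgroup.normalClosure_le_normal (N := (CoprodI.lift f).ker) ?_ hx
    rintro y ⟨u, v, g, h, hadj, rfl⟩
    simp only [SetLike.mem_coe, MonoidHom.mem_ker, map_commutatorElement,
      CoprodI.lift_of, commutatorElement_eq_one_iff_commute]
    exact hf u v hadj g h)

@[simp] theorem GP.lift_of {H : Type*} [Group H] (f : ∀ v, G v →* H) (hf) (v : V) (g : G v) :
    GP.lift Γ G f hf (GP.of Γ G v g) = f v g := by
  rfl

theorem GP.hom_ext {H : Type*} [Group H] {f g : GP Γ G →* H}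
    (h : ∀ v, f.comp (GP.of Γ G v) = g.comp (GP.of Γ G v)) : f = g := by
  apply QuotientGroup.monoidHom_ext
  apply CoprodI.ext_hom
  intro v
  ext x
  exact DFunLike.congr_fun (h v) x

theorem GP.of_commute {u v : V} (h : Γ.Adj u v) (g : G u) (k : G v) :
    Commute (GP.of Γ G u g) (GP.of Γ G v k) := by
  rw [← commutatorElement_eq_one_iff_commute]
  have hmem : (⁅CoprodI.of g, CoprodI.of k⁆ : CoprodI G) ∈ gpRel Γ G :=
    Subgroup.subset_normalClosure ⟨u, v, g, k, h, rfl⟩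
  have : QuotientGroup.mk' (gpRel Γ G) ⁅CoprodI.of g, CoprodI.of k⁆ = 1 :=
    (QuotientGroup.eq_one_iff _).mpr hmem
  rwa [map_commutatorElement] at this

theorem noncommPiCoprod_commute' {ι : Type*} [Fintype ι] {N : ι → Type*} {M : Type*}
    [∀ i, Group (N i)] [Group M] (ϕ : ∀ i, N i →* M)
    (hcomm : Pairwise fun i j => ∀ x y, Commute (ϕ i x) (ϕ j y))
    (f : ∀ i, N i) (y : M) (h : ∀ i, Commute y (ϕ i (f i))) :
    Commute y (MonoidHom.noncommPiCoprod ϕ hcomm f) :=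
  Finset.noncommProd_commute Finset.univ (fun i => ϕ i (f i))
    (fun _ _ _ _ hij => hcomm hij _ _) y (fun i _ => h i)

end AuxGP

section AuxGraph

variable {V : Type} [Fintype V] (Λ : SimpleGraph V)

theorem exists_maximal_clique_superset {c : Set V} (hc : Λ.IsClique c) :
    ∃ s : Set V, Maximal Λ.IsClique s ∧ c ⊆ s := by
  obtain ⟨s, hs, hmax⟩ := Set.Finite.exists_maximalFor id {s : Set V | Λ.IsClique s ∧ c ⊆ s}
    (Set.toFinite _) ⟨c, hc, subset_rfl⟩
  refine ⟨s, ⟨hs.1, fun t ht hst => ?_⟩, hs.2⟩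
  exact (hmax ⟨ht, hs.2.trans hst⟩ hst).ge

theorem sim_adj {u v : V} (h : Quotient.mk (simSetoid Λ) u = Quotient.mk (simSetoid Λ) v)
    (hne : u ≠ v) : Λ.Adj u v := by
  have hrel := Quotient.exact h
  obtain ⟨s, hs, hus⟩ := exists_maximal_clique_superset Λ
    (c := {u}) (by simp [SimpleGraph.IsClique, Set.pairwise_singleton])
  have hu : u ∈ s := hus rfl
  have hv : v ∈ s := (hrel s hs).mp hu
  exact hs.prop hu hv hne

theorem adj_of_T0Q_adj {a b : Quotient (simSetoid Λ)} (hab : (T0Q Λ).Adj a b)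
    {u v : V} (hu : Quotient.mk (simSetoid Λ) u = a) (hv : Quotient.mk (simSetoid Λ) v = b) :
    Λ.Adj u v := by
  obtain ⟨hne, u0, v0, hu0, hv0, hadj⟩ := hab
  have hclique : Λ.IsClique {u0, v0} := by
    haveI : Std.Symm Λ.Adj := ⟨fun _ _ h => h.symm⟩
    rw [SimpleGraph.isClique_iff, Set.pairwise_pair_of_symm]
    intro _; exact hadj
  obtain ⟨s, hs, hsub⟩ := exists_maximal_clique_superset Λ hclique
  have hru : (simSetoid Λ).r u u0 := Quotient.exact (hu.trans hu0.symm)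
  have hrv : (simSetoid Λ).r v v0 := Quotient.exact (hv.trans hv0.symm)
  have hus : u ∈ s := (hru s hs).mpr (hsub (by simp))
  have hvs : v ∈ s := (hrv s hs).mpr (hsub (by simp))
  have huv : u ≠ v := by
    rintro rfl
    exact hne (hu.symm.trans hv)
  exact hs.prop hus hvs huv

end AuxGraph

section AuxIso

variable {V : Type} [Fintype V] (Λ : SimpleGraph V) (G : V → Type) [∀ v, Group (G v)]

/-- Inclusion of a vertex group into the class group of its class. -/
noncomputable def singCG (u : V) : G u →* classGroup Λ G (Quotient.mk (simSetoid Λ) u) :=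
  MonoidHom.mulSingle (fun v : {v : V // Quotient.mk (simSetoid Λ) v = Quotient.mk (simSetoid Λ) u} => G v.1)
    ⟨u, rfl⟩

set_option maxHeartbeats 1000000 in
theorem comm_same (a : Quotient (simSetoid Λ)) (u v : V)
    (hu : Quotient.mk (simSetoid Λ) u = a) (hv : Quotient.mk (simSetoid Λ) v = a)
    (hne : u ≠ v) (g : G u) (k : G v) :
    Commute (GP.of (T0Q Λ) (classGroup Λ G) a (Pi.mulSingle ⟨u, hu⟩ g))
      (GP.of (T0Q Λ) (classGroup Λ G) a (Pi.mulSingle ⟨v, hv⟩ k)) :=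
by
  have hij : (⟨u, hu⟩ : {w : V // Quotient.mk (simSetoid Λ) w = a}) ≠ ⟨v, hv⟩ := by
    simpa using hne
  have h1 : Commute
      (Pi.mulSingle (M := fun w : {w : V // Quotient.mk (simSetoid Λ) w = a} => G w.1) ⟨u, hu⟩ g)
      (Pi.mulSingle ⟨v, hv⟩ k) := by
    exact Pi.mulSingle_commute (f := fun w : {w : V // Quotient.mk (simSetoid Λ) w = a} => G w.1)
      hij g k
  exact h1.map (GP.of (T0Q Λ) (classGroup Λ G) a)

theorem of_single_eq {u : V} (a : Quotient (simSetoid Λ))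
    (hu : Quotient.mk (simSetoid Λ) u = a) (g : G u) :
    GP.of (T0Q Λ) (classGroup Λ G) (Quotient.mk (simSetoid Λ) u) (singCG Λ G u g)
      = GP.of (T0Q Λ) (classGroup Λ G) a (Pi.mulSingle ⟨u, hu⟩ g) := by
  subst hu; rfl

/-- The forward homomorphism. -/
noncomputable def fwdGP : GP Λ G →* GP (T0Q Λ) (classGroup Λ G) :=
  GP.lift Λ G
    (fun u => (GP.of (T0Q Λ) (classGroup Λ G) (Quotient.mk (simSetoid Λ) u)).comp (singCG Λ G u))
    (by
      intro u v hadj g k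
      simp only [MonoidHom.comp_apply]
      by_cases h : Quotient.mk (simSetoid Λ) u = Quotient.mk (simSetoid Λ) v
      · rw [of_single_eq Λ G (Quotient.mk (simSetoid Λ) u) rfl g,
          of_single_eq Λ G (Quotient.mk (simSetoid Λ) u) h.symm k]
        exact comm_same Λ G _ u v rfl h.symm hadj.ne g k
      · exact GP.of_commute (T0Q Λ) (classGroup Λ G) ⟨h, u, v, rfl, rfl, hadj⟩ _ _)

theorem bwd_hcomm (a : Quotient (simSetoid Λ)) :
    Pairwise fun (i j : {v : V // Quotient.mk (simSetoid Λ) v = a}) =>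
      ∀ x y, Commute (GP.of Λ G i.1 x) (GP.of Λ G j.1 y) := by
  intro i j hij x y
  have hne : i.1 ≠ j.1 := fun e => hij (Subtype.ext e)
  exact GP.of_commute Λ G (sim_adj Λ (i.2.trans j.2.symm) hne) x y

/-- The backward homomorphism on a class group. -/
noncomputable def bwdCG (a : Quotient (simSetoid Λ)) : classGroup Λ G a →* GP Λ G :=
  MonoidHom.noncommPiCoprod (fun i : {v : V // Quotient.mk (simSetoid Λ) v = a} => GP.of Λ G i.1)
    (bwd_hcomm Λ G a)

/-- The backward homomorphism. -/
noncomputable def bwdGP : GP (T0Q Λ) (classGroup Λ G) →* GP Λ G :=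
  GP.lift (T0Q Λ) (classGroup Λ G) (bwdCG Λ G)
    (by
      intro a b hab f k
      exact (show Commute (bwdCG Λ G a f) (bwdCG Λ G b k) from by
        refine noncommPiCoprod_commute' _ _ _ _ (fun j => ?_)
        refine ((noncommPiCoprod_commute' _ _ _ _ (fun i => ?_)).symm)
        exact (GP.of_commute Λ G (adj_of_T0Q_adj Λ hab i.2 j.2) (f i) (k j)).symm))

end AuxIso

/-- The graph product of a labeled-graph is isomorphic to the graph product of
its `T₀`-quotient. -/
theorem graph_product_iso_t0_quotient
    {V : Type} [Fintype V] [Nonempty V] (Λ : SimpleGraph V)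
    (G : V → Type) [∀ v, Group (G v)] [∀ v, Nontrivial (G v)] :
    Nonempty (GP Λ G ≃* GP (T0Q Λ) (classGroup Λ G)) := by
  refine ⟨MonoidHom.toMulEquiv (fwdGP Λ G) (bwdGP Λ G) ?_ ?_⟩
  · apply GP.hom_ext
    intro u
    ext g
    show bwdGP Λ G (fwdGP Λ G (GP.of Λ G u g)) = GP.of Λ G u g
    rw [fwdGP, GP.lift_of]
    show bwdGP Λ G (GP.of (T0Q Λ) (classGroup Λ G) (Quotient.mk (simSetoid Λ) u)
      (singCG Λ G u g)) = _
    rw [bwdGP, GP.lift_of]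
    exact MonoidHom.noncommPiCoprod_mulSingle _ _ _
  · apply GP.hom_ext
    intro a
    rw [MonoidHom.id_comp]
    apply MonoidHom.pi_ext
    intro i x
    show fwdGP Λ G (bwdGP Λ G (GP.of (T0Q Λ) (classGroup Λ G) a (Pi.mulSingle i x))) = _
    erw [bwdGP, GP.lift_of]
    have e1 : bwdCG Λ G a (Pi.mulSingle i x) = GP.of Λ G i.1 x :=
      MonoidHom.noncommPiCoprod_mulSingle _ _ _
    rw [e1, fwdGP, GP.lift_of]
    show GP.of (T0Q Λ) (classGroup Λ G) _ (singCG Λ G i.1 x) = _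
    rw [of_single_eq Λ G a i.2 x]
    rfl
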